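/- Let L be a solvable Leibniz algebra with nilradical N. Then the centralizer of N in L is contained in N, i.e. Z_L(N) ⊆ N. -/
import Mathlib


/-- A (right) Leibniz algebra structure on an `F`-vector space `L`:
a bilinear bracket satisfying `[x,[y,z]] = [[x,y],z] - [[x,z],y]`. -/
structure LeibnizAlg (F : Type*) (L : Type*) [Field F] [AddCommGroup L] [Module F L] where
  bracket : L →ₗ[F] L →ₗ[F] L
  leibniz : ∀ x y z : L,
    bracket x (bracket y z) = bracket (bracket x y) z - bracket (bracket x z) y

namespace LeibnizAlg

variable {F : Type*} {L : Type*} [Field F] [AddCommGroup L] [Module F L]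

/-- The product `[M, N]` of two subspaces: the span of all brackets `[m, n]`. -/
def prod (A : LeibnizAlg F L) (M N : Submodule F L) : Submodule F L :=
  Submodule.span F {z : L | ∃ m ∈ M, ∃ n ∈ N, z = A.bracket m n}

/-- A subalgebra: a subspace closed under the product. -/
def IsSubalgebra (A : LeibnizAlg F L) (S : Submodule F L) : Prop :=
  A.prod S S ≤ S

/-- A (two-sided) ideal: `[I, L] ⊆ I` and `[L, I] ⊆ I`. -/
def IsIdeal (A : LeibnizAlg F L) (I : Submodule F L) : Prop :=
  A.prod I ⊤ ≤ I ∧ A.prod ⊤ I ≤ I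

/-- Lower central series of a subspace `U`: `lcs U 0 = U = U¹`,
`lcs U k = U^(k+1)`, i.e. `lcs U (k+1) = [lcs U k, U]`. -/
def lcs (A : LeibnizAlg F L) (U : Submodule F L) : ℕ → Submodule F L
  | 0 => U
  | k + 1 => A.prod (lcs A U k) U

/-- `U` is nilpotent: `U^(n+1) = 0` for some `n`. -/
def IsNilpotentSub (A : LeibnizAlg F L) (U : Submodule F L) : Prop :=
  ∃ n : ℕ, A.lcs U n = ⊥

/-- `U` is abelian: `[U, U] = 0`. -/
def IsAbelian (A : LeibnizAlg F L) (U : Submodule F L) : Prop :=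
  A.prod U U = ⊥

/-- An `A`-algebra: every nilpotent subalgebra is abelian. -/
def IsAAlgebra (A : LeibnizAlg F L) : Prop :=
  ∀ U : Submodule F L, A.IsSubalgebra U → A.IsNilpotentSub U → A.IsAbelian U

/-- Derived series: `derSeries 0 = L`, `derSeries (k+1) = [derSeries k, derSeries k]`. -/
def derSeries (A : LeibnizAlg F L) : ℕ → Submodule F L
  | 0 => ⊤
  | k + 1 => A.prod (derSeries A k) (derSeries A k)

/-- `L` is solvable: some term of the derived series vanishes. -/
def IsSolvable (A : LeibnizAlg F L) : Prop :=
  ∃ n : ℕ, A.derSeries n = ⊥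

/-- The centralizer `Z_L(U)` of a subspace `U`. -/
def centralizer (A : LeibnizAlg F L) (U : Submodule F L) : Submodule F L where
  carrier := {x : L | ∀ u ∈ U, A.bracket x u = 0 ∧ A.bracket u x = 0}
  add_mem' := by
    intro a b ha hb u hu
    refine ⟨?_, ?_⟩
    · rw [map_add, LinearMap.add_apply, (ha u hu).1, (hb u hu).1, add_zero]
    · rw [map_add, (ha u hu).2, (hb u hu).2, add_zero]
  zero_mem' := by
    intro u hu
    refine ⟨?_, ?_⟩
    · rw [map_zero, LinearMap.zero_apply]
    · rw [map_zero]
  smul_mem' := by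
    intro c a ha u hu
    refine ⟨?_, ?_⟩
    · rw [map_smul, LinearMap.smul_apply, (ha u hu).1, smul_zero]
    · rw [map_smul, (ha u hu).2, smul_zero]

/-- The centre of the subalgebra `M`: elements of `M` centralizing `M`. -/
def centerOf (A : LeibnizAlg F L) (M : Submodule F L) : Submodule F L :=
  M ⊓ A.centralizer M

/-- `N` is the nilradical: the largest nilpotent ideal. -/
def IsNilradical (A : LeibnizAlg F L) (N : Submodule F L) : Prop :=
  A.IsIdeal N ∧ A.IsNilpotentSub N ∧
    ∀ I : Submodule F L, A.IsIdeal I → A.IsNilpotentSub I → I ≤ N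

/-- A minimal ideal: a nonzero ideal containing no ideal other than `0` and itself. -/
def IsMinimalIdeal (A : LeibnizAlg F L) (I : Submodule F L) : Prop :=
  A.IsIdeal I ∧ I ≠ ⊥ ∧ ∀ J : Submodule F L, A.IsIdeal J → J ≤ I → J = ⊥ ∨ J = I

/-- A maximal subalgebra. -/
def IsMaximalSubalgebra (A : LeibnizAlg F L) (M : Submodule F L) : Prop :=
  A.IsSubalgebra M ∧ M ≠ ⊤ ∧
    ∀ S : Submodule F L, A.IsSubalgebra S → M ≤ S → S = M ∨ S = ⊤

/-- `L` is φ-free: every ideal contained in all maximal subalgebras is zero. -/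
def IsPhiFree (A : LeibnizAlg F L) : Prop :=
  ∀ I : Submodule F L, A.IsIdeal I →
    (∀ M : Submodule F L, A.IsMaximalSubalgebra M → I ≤ M) → I = ⊥

/-- `Asoc L`: the sum of the abelian minimal ideals. -/
def asoc (A : LeibnizAlg F L) : Submodule F L :=
  sSup {I : Submodule F L | A.IsMinimalIdeal I ∧ A.IsAbelian I}

/-- A Cartan subalgebra: a nilpotent, self-normalizing subalgebra. -/
def IsCartan (A : LeibnizAlg F L) (C : Submodule F L) : Prop :=
  A.IsSubalgebra C ∧ A.IsNilpotentSub C ∧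
    ∀ x : L, (∀ c ∈ C, A.bracket x c ∈ C ∧ A.bracket c x ∈ C) → x ∈ C

/-- A maximal nilpotent subalgebra. -/
def IsMaxNilpotentSubalgebra (A : LeibnizAlg F L) (U : Submodule F L) : Prop :=
  A.IsSubalgebra U ∧ A.IsNilpotentSub U ∧
    ∀ V : Submodule F L, A.IsSubalgebra V → A.IsNilpotentSub V → U ≤ V → V = U

end LeibnizAlg


namespace LeibnizAlg

variable {F : Type*} {L : Type*} [Field F] [AddCommGroup L] [Module F L]
variable (A : LeibnizAlg F L)

lemma prod_le_iff' {M N P : Submodule F L} :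
    A.prod M N ≤ P ↔ ∀ m ∈ M, ∀ n ∈ N, A.bracket m n ∈ P := by
  constructor
  · intro h m hm n hn
    exact h (Submodule.subset_span ⟨m, hm, n, hn, rfl⟩)
  · intro h
    apply Submodule.span_le.2
    rintro z ⟨m, hm, n, hn, rfl⟩
    exact h m hm n hn

lemma bracket_mem_prod {M N : Submodule F L} {m n : L} (hm : m ∈ M) (hn : n ∈ N) :
    A.bracket m n ∈ A.prod M N :=
  Submodule.subset_span ⟨m, hm, n, hn, rfl⟩

lemma prod_mono {M M' N N' : Submodule F L} (h1 : M ≤ M') (h2 : N ≤ N') :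
    A.prod M N ≤ A.prod M' N' :=
  (A.prod_le_iff').2 fun m hm n hn => A.bracket_mem_prod (h1 hm) (h2 hn)

lemma prod_sup_right {M N N' : Submodule F L} :
    A.prod M (N ⊔ N') ≤ A.prod M N ⊔ A.prod M N' := by
  rw [prod_le_iff']
  intro m hm n hn
  obtain ⟨a, ha, b, hb, rfl⟩ := Submodule.mem_sup.1 hn
  rw [map_add]
  exact add_mem (Submodule.mem_sup_left (A.bracket_mem_prod hm ha))
    (Submodule.mem_sup_right (A.bracket_mem_prod hm hb))

lemma prod_sup_left {M M' N : Submodule F L} :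
    A.prod (M ⊔ M') N ≤ A.prod M N ⊔ A.prod M' N := by
  rw [prod_le_iff']
  intro m hm n hn
  obtain ⟨a, ha, b, hb, rfl⟩ := Submodule.mem_sup.1 hm
  rw [map_add, LinearMap.add_apply]
  exact add_mem (Submodule.mem_sup_left (A.bracket_mem_prod ha hn))
    (Submodule.mem_sup_right (A.bracket_mem_prod hb hn))

lemma isIdeal_sup {I J : Submodule F L} (hI : A.IsIdeal I) (hJ : A.IsIdeal J) :
    A.IsIdeal (I ⊔ J) :=
  ⟨le_trans A.prod_sup_left (sup_le_sup hI.1 hJ.1),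
   le_trans A.prod_sup_right (sup_le_sup hI.2 hJ.2)⟩

lemma bracket_eq_add (a b x : L) :
    A.bracket (A.bracket a b) x = A.bracket a (A.bracket b x) + A.bracket (A.bracket a x) b := by
  rw [A.leibniz a b x]; abel

lemma isIdeal_prod_self {I : Submodule F L} (hI : A.IsIdeal I) :
    A.IsIdeal (A.prod I I) := by
  constructor
  · rw [prod_le_iff']
    intro w hw x _
    induction hw using Submodule.span_induction with
    | mem z hz =>
      obtain ⟨a, ha, b, hb, rfl⟩ := hz
      rw [A.bracket_eq_add a b x]
      exact add_mem (A.bracket_mem_prod ha (hI.1 (A.bracket_mem_prod hb trivial)))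
        (A.bracket_mem_prod (hI.1 (A.bracket_mem_prod ha trivial)) hb)
    | zero => rw [map_zero, LinearMap.zero_apply]; exact zero_mem _
    | add w1 w2 _ _ h1 h2 => rw [map_add, LinearMap.add_apply]; exact add_mem h1 h2
    | smul c w _ h => rw [map_smul, LinearMap.smul_apply]; exact Submodule.smul_mem _ c h
  · rw [prod_le_iff']
    intro x _ w hw
    induction hw using Submodule.span_induction with
    | mem z hz =>
      obtain ⟨a, ha, b, hb, rfl⟩ := hz
      rw [A.leibniz x a b]
      exact sub_mem (A.bracket_mem_prod (hI.2 (A.bracket_mem_prod trivial ha)) hb)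
        (A.bracket_mem_prod (hI.2 (A.bracket_mem_prod trivial hb)) ha)
    | zero => rw [map_zero]; exact zero_mem _
    | add w1 w2 _ _ h1 h2 => rw [map_add]; exact add_mem h1 h2
    | smul c w _ h => rw [map_smul]; exact Submodule.smul_mem _ c h

/-- Derived series of a subspace. -/
def derOf (U : Submodule F L) : ℕ → Submodule F L
  | 0 => U
  | k + 1 => A.prod (derOf U k) (derOf U k)

lemma derOf_isIdeal {U : Submodule F L} (hU : A.IsIdeal U) (k : ℕ) :
    A.IsIdeal (A.derOf U k) := by
  induction k with
  | zero => exact hU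
  | succ k ih => exact A.isIdeal_prod_self ih

lemma derOf_le_derSeries (U : Submodule F L) (k : ℕ) :
    A.derOf U k ≤ A.derSeries k := by
  induction k with
  | zero => exact le_top
  | succ k ih => exact A.prod_mono ih ih

lemma derOf_le_self {U : Submodule F L} (hU : A.prod U U ≤ U) (k : ℕ) :
    A.derOf U k ≤ U := by
  induction k with
  | zero => exact le_rfl
  | succ k ih => exact le_trans (A.prod_mono ih ih) hU

lemma mem_centralizer {U : Submodule F L} {x : L} :
    x ∈ A.centralizer U ↔ ∀ u ∈ U, A.bracket x u = 0 ∧ A.bracket u x = 0 := Iff.rfl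

lemma centralizer_isIdeal {U : Submodule F L} (hU : A.IsIdeal U) :
    A.IsIdeal (A.centralizer U) := by
  constructor
  · rw [prod_le_iff']
    intro z hz' x _
    have hz := A.mem_centralizer.1 hz'
    rw [mem_centralizer]
    intro u hu
    have hxu : A.bracket x u ∈ U := hU.2 (A.bracket_mem_prod trivial hu)
    have hux : A.bracket u x ∈ U := hU.1 (A.bracket_mem_prod hu trivial)
    constructor
    · have h := A.bracket_eq_add z x u
      simp only [(hz _ hxu).1, (hz u hu).1, map_zero, LinearMap.zero_apply, add_zero,
        zero_add] at h
      exact h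
    · have h := A.leibniz u z x
      simp only [(hz u hu).2, (hz _ hux).2, map_zero, LinearMap.zero_apply, zero_sub,
        sub_zero, neg_zero] at h
      exact h
  · rw [prod_le_iff']
    intro x _ z hz'
    have hz := A.mem_centralizer.1 hz'
    rw [mem_centralizer]
    intro u hu
    have hxu : A.bracket x u ∈ U := hU.2 (A.bracket_mem_prod trivial hu)
    have hux : A.bracket u x ∈ U := hU.1 (A.bracket_mem_prod hu trivial)
    constructor
    · have h := A.leibniz x z u
      simp only [(hz u hu).1, (hz _ hxu).2, map_zero, sub_zero] at h
      exact h.symm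
    · have h := A.leibniz u x z
      simp only [(hz _ hux).2, (hz u hu).2, map_zero, LinearMap.zero_apply, zero_sub,
        sub_zero, neg_zero] at h
      exact h

lemma lcs_le_self {U : Submodule F L} (hU : A.prod ⊤ U ≤ U) (k : ℕ) :
    A.lcs U k ≤ U := by
  induction k with
  | zero => exact le_rfl
  | succ k _ => exact le_trans (A.prod_mono le_top le_rfl) hU

lemma prod_centralizer_le_bot {U M : Submodule F L} (hM : M ≤ U) :
    A.prod M (A.centralizer U) ≤ ⊥ := by
  rw [prod_le_iff']
  intro m hm z hz
  rw [(A.mem_centralizer.1 hz m (hM hm)).2]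
  exact Submodule.zero_mem ⊥

lemma exists_boundary (P : ℕ → Prop) (h0 : ¬ P 0) {n : ℕ} (hn : P n) :
    ∃ k, ¬ P k ∧ P (k + 1) := by
  induction n with
  | zero => exact absurd hn h0
  | succ n ih =>
    by_cases hPn : P n
    · exact ih hPn
    · exact ⟨n, hPn, hn⟩

end LeibnizAlg

/-- If `L` is a solvable Leibniz algebra with nilradical `N`,
then `Z_L(N) ⊆ N`. -/
theorem centralizer_nilradical_le_nilradical
    {F L : Type*} [Field F] [AddCommGroup L] [Module F L] [FiniteDimensional F L]
    (A : LeibnizAlg F L) (hsolv : A.IsSolvable)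
    (N : Submodule F L) (hN : A.IsNilradical N) :
    A.centralizer N ≤ N := by
  set Z := A.centralizer N with hZdef
  by_contra hcon
  obtain ⟨z, hz1, hz2⟩ := SetLike.not_le_iff_exists.1 hcon
  have hZideal : A.IsIdeal Z := A.centralizer_isIdeal hN.1
  set M := Z ⊔ N with hMdef
  have hMideal : A.IsIdeal M := A.isIdeal_sup hZideal hN.1
  obtain ⟨n, hn⟩ := hsolv
  have hMn : A.derOf M n ≤ N := by
    refine le_trans (A.derOf_le_derSeries M n) ?_
    rw [hn]; exact bot_le
  have hM0 : ¬ A.derOf M 0 ≤ N := fun h => hz2 (h (Submodule.mem_sup_left hz1))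
  obtain ⟨k, hk1, hk2⟩ := LeibnizAlg.exists_boundary (fun k => A.derOf M k ≤ N) hM0 hMn
  set I := A.derOf M k ⊔ N with hIdef
  have hIideal : A.IsIdeal I := A.isIdeal_sup (A.derOf_isIdeal hMideal k) hN.1
  have hDk1 : A.prod (A.derOf M k) (A.derOf M k) ≤ N := hk2
  have hIprod : A.prod I I ≤ N := by
    have e1 : A.prod (A.derOf M k) I ≤ N := by
      refine le_trans A.prod_sup_right (sup_le hDk1 ?_)
      exact le_trans (A.prod_mono le_top le_rfl) hN.1.2
    have e2 : A.prod N I ≤ N := le_trans (A.prod_mono le_rfl le_top) hN.1.1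
    exact le_trans A.prod_sup_left (sup_le e1 e2)
  have hIleM : I ≤ Z ⊔ N := by
    refine sup_le ?_ le_sup_right
    exact A.derOf_le_self (le_trans (A.prod_mono le_rfl le_top) hMideal.1) k
  have hlcs : ∀ j, A.lcs I (j + 1) ≤ A.lcs N j := by
    intro j
    induction j with
    | zero => exact hIprod
    | succ j ih =>
      have h1 : A.prod (A.lcs I (j + 1)) I ≤ A.prod (A.lcs N j) (Z ⊔ N) :=
        A.prod_mono ih hIleM
      have h2 : A.prod (A.lcs N j) (Z ⊔ N) ≤ A.prod (A.lcs N j) Z ⊔ A.prod (A.lcs N j) N :=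
        A.prod_sup_right
      have h3 : A.prod (A.lcs N j) Z ≤ ⊥ :=
        A.prod_centralizer_le_bot (A.lcs_le_self hN.1.2 j)
      exact le_trans h1 (le_trans h2 (sup_le (le_trans h3 bot_le) le_rfl))
  obtain ⟨m0, hm0⟩ := hN.2.1
  have hInilp : A.IsNilpotentSub I := by
    refine ⟨m0 + 1, le_bot_iff.1 ?_⟩
    refine le_trans (hlcs m0) ?_
    rw [hm0]
  have hIN : I ≤ N := hN.2.2 I hIideal hInilp
  exact hk1 (le_trans le_sup_left hIN)
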